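/- The exponential mechanism is ε-differentially private: for a λ-sensitive quality function q : X^n × H → ℝ (meaning |q(S,h) − q(S',h)| ≤ λ for all h ∈ H and all neighboring S, S' differing in one entry), the mechanism that outputs h ∈ H with probability proportional to exp((ε/(2λ))·q(S,h)) satisfies: for all neighboring S, S' and every subset B ⊆ H, Pr[output on S ∈ B] ≤ e^ε · Pr[output on S' ∈ B]. -/

import Mathlib

theorem stmt_3 {X : Type*} {n : ℕ} {H : Type*} [Fintype H] [Nonempty H]
    (q : (Fin n → X) → H → ℝ) (ε lam : ℝ) (hε : 0 < ε) (hlam : 0 < lam)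
    (hsens : ∀ S S' : Fin n → X, (∃ i, ∀ j ≠ i, S j = S' j) → ∀ h : H, |q S h - q S' h| ≤ lam)
    (S S' : Fin n → X) (hnb : ∃ i, S i ≠ S' i ∧ ∀ j ≠ i, S j = S' j) (B : Finset H) :
    (∑ h ∈ B, Real.exp (ε / (2 * lam) * q S h)) / (∑ h, Real.exp (ε / (2 * lam) * q S h))
      ≤ Real.exp ε *
        ((∑ h ∈ B, Real.exp (ε / (2 * lam) * q S' h)) /
          (∑ h, Real.exp (ε / (2 * lam) * q S' h))) := by
  obtain ⟨i, _, hji⟩ := hnb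
  have hs := hsens S S' ⟨i, hji⟩
  set c := ε / (2 * lam) with hc
  have hcpos : 0 < c := div_pos hε (by linarith)
  have hcl : c * lam = ε / 2 := by
    field_simp [hc]
    rw [hc, div_mul_eq_mul_div, div_mul_eq_mul_div, div_eq_iff (by positivity : (2 * lam) ≠ 0)]
    ring
  have key : ∀ h : H, Real.exp (c * q S h) ≤ Real.exp (ε / 2) * Real.exp (c * q S' h) := by
    intro h
    rw [← Real.exp_add, Real.exp_le_exp]
    have h1 : q S h - q S' h ≤ lam := (abs_le.mp (hs h)).2
    nlinarith
  have key' : ∀ h : H, Real.exp (c * q S' h) ≤ Real.exp (ε / 2) * Real.exp (c * q S h) := by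
    intro h
    rw [← Real.exp_add, Real.exp_le_exp]
    have h1 : -lam ≤ q S h - q S' h := (abs_le.mp (hs h)).1
    nlinarith
  have hA : (∑ h ∈ B, Real.exp (c * q S h)) ≤ Real.exp (ε / 2) * ∑ h ∈ B, Real.exp (c * q S' h) := by
    rw [Finset.mul_sum]
    exact Finset.sum_le_sum fun h _ => key h
  have hD : (∑ h, Real.exp (c * q S' h)) ≤ Real.exp (ε / 2) * ∑ h, Real.exp (c * q S h) := by
    rw [Finset.mul_sum]
    exact Finset.sum_le_sum fun h _ => key' h
  have hDpos : 0 < ∑ h, Real.exp (c * q S h) :=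
    Finset.sum_pos (fun h _ => Real.exp_pos _) Finset.univ_nonempty
  have hD'pos : 0 < ∑ h, Real.exp (c * q S' h) :=
    Finset.sum_pos (fun h _ => Real.exp_pos _) Finset.univ_nonempty
  have hE : (0:ℝ) < Real.exp (ε / 2) := Real.exp_pos _
  rw [div_le_iff₀ hDpos]
  have hA'nonneg : 0 ≤ ∑ h ∈ B, Real.exp (c * q S' h) :=
    Finset.sum_nonneg fun h _ => (Real.exp_pos _).le
  calc (∑ h ∈ B, Real.exp (c * q S h))
      ≤ Real.exp (ε / 2) * ∑ h ∈ B, Real.exp (c * q S' h) := hA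
    _ = (Real.exp ε * ((∑ h ∈ B, Real.exp (c * q S' h)) / ∑ h, Real.exp (c * q S' h)))
          * (Real.exp (ε / 2) * ∑ h, Real.exp (c * q S' h)) / (Real.exp ε) := by
        field_simp
    _ ≤ (Real.exp ε * ((∑ h ∈ B, Real.exp (c * q S' h)) / ∑ h, Real.exp (c * q S' h)))
          * (Real.exp (ε / 2) * (Real.exp (ε / 2) * ∑ h, Real.exp (c * q S h))) / (Real.exp ε) := by
        gcongr
    _ = Real.exp ε * ((∑ h ∈ B, Real.exp (c * q S' h)) / ∑ h, Real.exp (c * q S' h))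
          * ∑ h, Real.exp (c * q S h) := by
        rw [show Real.exp (ε / 2) * (Real.exp (ε / 2) * ∑ h, Real.exp (c * q S h))
            = Real.exp ε * ∑ h, Real.exp (c * q S h) from by
          rw [← mul_assoc, ← Real.exp_add, show ε/2+ε/2 = ε by ring]]
        field_simp
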